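/- arXiv:0904.3587 — 2 statements merged into one kernel-verified Lean document; each statement's English description precedes it below -/
import Mathlib

section
/- With T_k as above, for all y, z ≥ 0 and real γ ≥ 1: (y^γ − z^γ)(T_k(y) − T_k(z)) ≥ |T_k(y) − T_k(z)|^{γ+1}. -/
theorem stmt_4 (T : ℝ → ℝ) (hC1 : ContDiff ℝ 1 T)
    (hconc : ConcaveOn ℝ Set.univ T)
    (hid : ∀ z : ℝ, z ≤ 1 → T z = z)
    (htop : ∀ z : ℝ, 3 ≤ z → T z = 2)
    (hder : ∀ z : ℝ, 0 ≤ deriv T z ∧ deriv T z ≤ 1)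
    (k : ℝ) (hk : 0 < k) (γ : ℝ) (hγ : 1 ≤ γ) :
    ∀ y z : ℝ, 0 ≤ y → 0 ≤ z →
      |k * T (y / k) - k * T (z / k)| ^ (γ + 1) ≤
        (y ^ γ - z ^ γ) * (k * T (y / k) - k * T (z / k)) := by
  have hdiff : Differentiable ℝ T := hC1.differentiable one_ne_zero
  have hmono : Monotone T := monotone_of_deriv_nonneg hdiff (fun x => (hder x).1)
  have hlip : ∀ a b : ℝ, |T a - T b| ≤ |a - b| := by
    intro a b
    have := Convex.norm_image_sub_le_of_norm_deriv_le (f := T) (s := Set.univ)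
      (fun x _ => hdiff.differentiableAt)
      (fun x _ => by simpa [Real.norm_eq_abs, abs_of_nonneg (hder x).1] using (hder x).2)
      convex_univ (Set.mem_univ b) (Set.mem_univ a)
    simpa [Real.norm_eq_abs] using this
  -- key case: z ≤ y
  have key : ∀ y z : ℝ, 0 ≤ y → 0 ≤ z → z ≤ y →
      |k * T (y / k) - k * T (z / k)| ^ (γ + 1) ≤
        (y ^ γ - z ^ γ) * (k * T (y / k) - k * T (z / k)) := by
    intro y z hy hz hzy
    obtain ⟨d, hd⟩ : ∃ d : ℝ, d = k * T (y / k) - k * T (z / k) := ⟨_, rfl⟩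
    rw [← hd]
    have hd0 : 0 ≤ d := by
      rw [hd]
      have hm := hmono ((div_le_div_iff_of_pos_right hk).mpr hzy)
      nlinarith [mul_nonneg hk.le (sub_nonneg.2 hm)]
    have hdyz : d ≤ y - z := by
      rw [hd]
      have h1 := hlip (y / k) (z / k)
      rw [abs_of_nonneg (sub_nonneg.2 (hmono ((div_le_div_iff_of_pos_right hk).mpr hzy))),
        abs_of_nonneg (sub_nonneg.2 ((div_le_div_iff_of_pos_right hk).mpr hzy))] at h1
      have h2 : k * (y / k - z / k) = y - z := by field_simp
      nlinarith [mul_le_mul_of_nonneg_left h1 hk.le]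
    rcases eq_or_lt_of_le hd0 with h0 | h0
    · rw [← h0]
      simp [Real.zero_rpow (by linarith : γ + 1 ≠ 0)]
    · rw [abs_of_pos h0, Real.rpow_add h0, Real.rpow_one]
      have h3 : d ^ γ ≤ (y - z) ^ γ := Real.rpow_le_rpow hd0 hdyz (by linarith)
      have h4 : (y - z) ^ γ + z ^ γ ≤ y ^ γ := by
        have h := NNReal.coe_le_coe.2
          (NNReal.add_rpow_le_rpow_add ((y - z).toNNReal) (z.toNNReal) hγ)
        rw [NNReal.coe_add, NNReal.coe_rpow, NNReal.coe_rpow, NNReal.coe_rpow,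
          NNReal.coe_add, Real.coe_toNNReal _ (sub_nonneg.2 hzy),
          Real.coe_toNNReal _ hz, sub_add_cancel] at h
        exact h
      nlinarith

  intro y z hy hz
  rcases le_total z y with h | h
  · exact key y z hy hz h
  · have := key z y hz hy h
    rw [abs_sub_comm]
    calc |k * T (z / k) - k * T (y / k)| ^ (γ + 1)
        ≤ (z ^ γ - y ^ γ) * (k * T (z / k) - k * T (y / k)) := this
      _ = (y ^ γ - z ^ γ) * (k * T (y / k) - k * T (z / k)) := by ring
end

section
/- Let (X, μ) be a finite measure space and ρ_n ≥ 0 with ρ_n → ρ weakly in L¹(μ) and ρ_n ln ρ_n → g weakly in L¹(μ). Then g ≥ ρ ln ρ a.e., and if moreover ∫ g dμ = ∫ ρ ln ρ dμ, then ρ_n → ρ in measure (hence a.e. along a subsequence) — in particular g = ρ ln ρ forces strong convexity identification since z ↦ z ln z is strictly convex. -/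
open MeasureTheory Filter

private lemma aux_tangent {q z : ℝ} (hq : 0 < q) (hz : 0 ≤ z) :
    (Real.log q + 1) * z - q ≤ z * Real.log z := by
  rcases eq_or_lt_of_le hz with h | hz
  · rw [← h]; simp; linarith
  · have h1 : 1 - (z / q)⁻¹ ≤ Real.log (z / q) :=
      Real.one_sub_inv_le_log_of_pos (div_pos hz hq)
    have h2 : Real.log (z / q) = Real.log z - Real.log q := Real.log_div hz.ne' hq.ne'
    have h3 : (z / q)⁻¹ = q / z := by rw [inv_div]
    rw [h2, h3] at h1
    have h4 : z * (q / z) = q := mul_div_cancel₀ q hz.ne'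
    have h5 : z * (1 - q / z) ≤ z * (Real.log z - Real.log q) :=
      mul_le_mul_of_nonneg_left h1 hz.le
    nlinarith

private lemma aux_bregman {a b : ℝ} (ha : 0 < a) (hb : 0 ≤ b) :
    (Real.sqrt b - Real.sqrt a) ^ 2 ≤
      b * Real.log b - a * Real.log a - (Real.log a + 1) * (b - a) := by
  have hsa2 : Real.sqrt a * Real.sqrt a = a := Real.mul_self_sqrt ha.le
  have hsapos : 0 < Real.sqrt a := Real.sqrt_pos.2 ha
  rcases eq_or_lt_of_le hb with h | hb
  · rw [← h]; simp [Real.sqrt_zero]; nlinarith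
  · have hsb2 : Real.sqrt b * Real.sqrt b = b := Real.mul_self_sqrt hb.le
    have hsbpos : 0 < Real.sqrt b := Real.sqrt_pos.2 hb
    have h1 : 1 - (Real.sqrt b / Real.sqrt a)⁻¹ ≤ Real.log (Real.sqrt b / Real.sqrt a) :=
      Real.one_sub_inv_le_log_of_pos (div_pos hsbpos hsapos)
    have h2 : Real.log (Real.sqrt b / Real.sqrt a)
        = Real.log b / 2 - Real.log a / 2 := by
      rw [Real.log_div hsbpos.ne' hsapos.ne', Real.log_sqrt hb.le, Real.log_sqrt ha.le]
    have h3 : (Real.sqrt b / Real.sqrt a)⁻¹ = Real.sqrt a / Real.sqrt b := by rw [inv_div]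
    rw [h2, h3] at h1
    have e : Real.sqrt b * (Real.sqrt a / Real.sqrt b) = Real.sqrt a := by
      field_simp
    have h5 : Real.sqrt b * (1 - Real.sqrt a / Real.sqrt b)
        ≤ Real.sqrt b * (Real.log b / 2 - Real.log a / 2) :=
      mul_le_mul_of_nonneg_left h1 hsbpos.le
    have h6 : Real.sqrt b - Real.sqrt a ≤ Real.sqrt b * (Real.log b / 2 - Real.log a / 2) := by
      rw [mul_sub, mul_one, e] at h5; exact h5
    nlinarith [mul_le_mul_of_nonneg_left h6 (by positivity : (0:ℝ) ≤ 2 * Real.sqrt b)]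

private lemma aux_sqrt_sub {u v : ℝ} (hv : 0 ≤ v) (huv : v < u) :
    Real.sqrt u - Real.sqrt v = (u - v) / (Real.sqrt u + Real.sqrt v) := by
  have hu : 0 < u := lt_of_le_of_lt hv huv
  have h1 : 0 < Real.sqrt u := Real.sqrt_pos.2 hu
  have h2 : 0 ≤ Real.sqrt v := Real.sqrt_nonneg v
  rw [eq_div_iff (by positivity)]
  nlinarith [Real.mul_self_sqrt hv, Real.mul_self_sqrt hu.le]

private lemma aux_sqrtgap {M ε a b : ℝ} (hε : 0 < ε) (ha : 0 ≤ a) (haM : a ≤ M)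
    (hb : 0 ≤ b) (h : ε ≤ |b - a|) :
    (Real.sqrt (M + ε) - Real.sqrt M) ^ 2 ≤ (Real.sqrt b - Real.sqrt a) ^ 2 := by
  have hM : 0 ≤ M := le_trans ha haM
  have hD : 0 < Real.sqrt (M + ε) + Real.sqrt M := by
    have : 0 < Real.sqrt (M + ε) := Real.sqrt_pos.2 (by linarith)
    positivity
  have hDM : Real.sqrt (M + ε) - Real.sqrt M = ε / (Real.sqrt (M + ε) + Real.sqrt M) := by
    rw [aux_sqrt_sub hM (by linarith)]; ring_nf
  have key : Real.sqrt (M + ε) - Real.sqrt M ≤ |Real.sqrt b - Real.sqrt a| := by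
    rcases le_abs.mp h with hba | hab
    · -- b ≥ a + ε
      have hba' : a + ε ≤ b := by linarith
      have h1 : Real.sqrt a ≤ Real.sqrt b := Real.sqrt_le_sqrt (by linarith)
      rw [abs_of_nonneg (by linarith)]
      have e1 : Real.sqrt (a + ε) - Real.sqrt a
          = ε / (Real.sqrt (a + ε) + Real.sqrt a) := by
        rw [aux_sqrt_sub ha (by linarith)]; ring_nf
      have h2 : Real.sqrt (a + ε) ≤ Real.sqrt b := Real.sqrt_le_sqrt hba'
      have h3 : Real.sqrt (a + ε) + Real.sqrt a ≤ Real.sqrt (M + ε) + Real.sqrt M :=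
        add_le_add (Real.sqrt_le_sqrt (by linarith)) (Real.sqrt_le_sqrt haM)
      have h4 : 0 < Real.sqrt (a + ε) + Real.sqrt a := by
        have : 0 < Real.sqrt (a + ε) := Real.sqrt_pos.2 (by linarith)
        positivity
      have h5 : ε / (Real.sqrt (M + ε) + Real.sqrt M)
          ≤ ε / (Real.sqrt (a + ε) + Real.sqrt a) := by gcongr
      rw [hDM]; linarith [e1 ▸ h5]
    · -- b ≤ a - ε
      have hab' : b ≤ a - ε := by linarith
      have hεa : ε ≤ a := by linarith
      have h1 : Real.sqrt b ≤ Real.sqrt a := Real.sqrt_le_sqrt (by linarith)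
      rw [abs_of_nonpos (by linarith), neg_sub]
      have e1 : Real.sqrt a - Real.sqrt (a - ε)
          = ε / (Real.sqrt a + Real.sqrt (a - ε)) := by
        rw [aux_sqrt_sub (by linarith) (by linarith)]; ring_nf
      have h2 : Real.sqrt b ≤ Real.sqrt (a - ε) := Real.sqrt_le_sqrt hab'
      have h3 : Real.sqrt a + Real.sqrt (a - ε) ≤ Real.sqrt (M + ε) + Real.sqrt M :=
        add_le_add (Real.sqrt_le_sqrt (by linarith)) (Real.sqrt_le_sqrt (by linarith))
      have h4 : 0 < Real.sqrt a + Real.sqrt (a - ε) := by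
        have : 0 < Real.sqrt a := Real.sqrt_pos.2 (by linarith)
        positivity
      have h5 : ε / (Real.sqrt (M + ε) + Real.sqrt M)
          ≤ ε / (Real.sqrt a + Real.sqrt (a - ε)) := by gcongr
      rw [hDM]; linarith [e1 ▸ h5]
  calc (Real.sqrt (M + ε) - Real.sqrt M) ^ 2
      ≤ |Real.sqrt b - Real.sqrt a| ^ 2 := by
        apply pow_le_pow_left₀ (by rw [hDM]; positivity) key
    _ = (Real.sqrt b - Real.sqrt a) ^ 2 := sq_abs _
theorem stmt_18 {X : Type*} [MeasurableSpace X] (μ : Measure X) [IsFiniteMeasure μ]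
    (ρn : ℕ → X → ℝ) (ρ g : X → ℝ)
    (hnn : ∀ n x, 0 ≤ ρn n x) (hρnn : ∀ x, 0 ≤ ρ x)
    (hm : ∀ n, Measurable (ρn n)) (hρm : Measurable ρ) (hgm : Measurable g)
    (hi : ∀ n, Integrable (ρn n) μ)
    (hli : ∀ n, Integrable (fun x => ρn n x * Real.log (ρn n x)) μ)
    (hρi : Integrable ρ μ)
    (hρli : Integrable (fun x => ρ x * Real.log (ρ x)) μ)
    (hgi : Integrable g μ)
    (hweak : ∀ φ : X → ℝ, Measurable φ → (∃ B : ℝ, ∀ x, |φ x| ≤ B) →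
      Tendsto (fun n => ∫ x, ρn n x * φ x ∂μ) atTop (nhds (∫ x, ρ x * φ x ∂μ)))
    (hweaklog : ∀ φ : X → ℝ, Measurable φ → (∃ B : ℝ, ∀ x, |φ x| ≤ B) →
      Tendsto (fun n => ∫ x, (ρn n x * Real.log (ρn n x)) * φ x ∂μ) atTop
        (nhds (∫ x, g x * φ x ∂μ))) :
    (∀ᵐ x ∂μ, ρ x * Real.log (ρ x) ≤ g x) ∧
    ((∫ x, g x ∂μ = ∫ x, ρ x * Real.log (ρ x) ∂μ) →
      TendstoInMeasure μ ρn atTop ρ) := by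
  have hae : ∀ᵐ x ∂μ, ρ x * Real.log (ρ x) ≤ g x := by
    have key : ∀ q : ℚ, ∀ᵐ x ∂μ, 0 < q → (Real.log q + 1) * ρ x - (q:ℝ) ≤ g x := by
      intro q
      rcases le_or_gt q 0 with hq | hq
      · filter_upwards with x h; exact absurd h (not_lt.2 hq)
      · have hq' : (0:ℝ) < (q:ℝ) := by exact_mod_cast hq
        have hnng : 0 ≤ᵐ[μ] fun x => g x - ((Real.log q + 1) * ρ x - (q:ℝ)) := by
          apply ae_nonneg_of_forall_setIntegral_nonneg
          · exact hgi.sub ((hρi.const_mul _).sub (integrable_const _))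
          · intro s hs hμs
            have conv : ∀ f : X → ℝ,
                ∫ x, f x * s.indicator (fun _ => (1:ℝ)) x ∂μ = ∫ x in s, f x ∂μ := by
              intro f
              rw [← integral_indicator hs]
              congr 1; funext x
              by_cases hx : x ∈ s <;> simp [Set.indicator_apply, hx]
            have hφm : Measurable (s.indicator (fun _ => (1:ℝ))) :=
              measurable_const.indicator hs
            have hφb : ∃ B : ℝ, ∀ x, |s.indicator (fun _ => (1:ℝ)) x| ≤ B :=
              ⟨1, fun x => by by_cases hx : x ∈ s <;> simp [Set.indicator_apply, hx]⟩
            have W1 := hweaklog _ hφm hφb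
            have W2 := hweak _ hφm hφb
            rw [conv g] at W1
            rw [conv ρ] at W2
            have W1' : Tendsto (fun n => ∫ x in s, ρn n x * Real.log (ρn n x) ∂μ) atTop
                (nhds (∫ x in s, g x ∂μ)) :=
              W1.congr fun n => conv _
            have W2' : Tendsto (fun n => ∫ x in s, ρn n x ∂μ) atTop
                (nhds (∫ x in s, ρ x ∂μ)) :=
              W2.congr fun n => conv _
            have hn : ∀ n, (Real.log q + 1) * (∫ x in s, ρn n x ∂μ) - q * (μ s).toReal
                ≤ ∫ x in s, ρn n x * Real.log (ρn n x) ∂μ := by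
              intro n
              have hmono : ∫ x in s, ((Real.log q + 1) * ρn n x - (q:ℝ)) ∂μ
                  ≤ ∫ x in s, ρn n x * Real.log (ρn n x) ∂μ := by
                apply integral_mono
                · exact (((hi n).const_mul _).sub (integrable_const _)).restrict
                · exact (hli n).restrict
                · exact fun x => aux_tangent hq' (hnn n x)
              have hcalc : ∫ x in s, ((Real.log q + 1) * ρn n x - (q:ℝ)) ∂μ
                  = (Real.log q + 1) * (∫ x in s, ρn n x ∂μ) - q * (μ s).toReal := by
                have I1 : Integrable (fun x : X => (Real.log q + 1) * ρn n x) (μ.restrict s) :=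
                  ((hi n).const_mul _).restrict
                have I2 : Integrable (fun _ : X => (q:ℝ)) (μ.restrict s) := integrable_const _
                rw [integral_sub I1 I2, integral_const_mul, setIntegral_const]
                simp [smul_eq_mul, Measure.real]; ring
              linarith [hcalc ▸ hmono]
            have final : (Real.log q + 1) * (∫ x in s, ρ x ∂μ) - q * (μ s).toReal
                ≤ ∫ x in s, g x ∂μ :=
              le_of_tendsto_of_tendsto' ((W2'.const_mul _).sub tendsto_const_nhds) W1' hn
            have hcalc2 : ∫ x in s, (g x - ((Real.log q + 1) * ρ x - (q:ℝ))) ∂μ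
                = (∫ x in s, g x ∂μ)
                  - ((Real.log q + 1) * (∫ x in s, ρ x ∂μ) - q * (μ s).toReal) := by
              have I1 : Integrable (fun x : X => (Real.log q + 1) * ρ x) (μ.restrict s) :=
                (hρi.const_mul _).restrict
              have I2 : Integrable (fun _ : X => (q:ℝ)) (μ.restrict s) := integrable_const _
              have I3 : Integrable (fun x : X => (Real.log q + 1) * ρ x - (q:ℝ)) (μ.restrict s) :=
                I1.sub I2
              rw [integral_sub hgi.restrict I3, integral_sub I1 I2, integral_const_mul,
                setIntegral_const]
              simp [smul_eq_mul, Measure.real]; ring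
            rw [hcalc2]; linarith
        filter_upwards [hnng] with x hx
        intro _
        simpa [sub_nonneg] using hx
    have key2 : ∀ᵐ x ∂μ, ∀ q : ℚ, 0 < q → (Real.log q + 1) * ρ x - (q:ℝ) ≤ g x :=
      (ae_all_iff).2 key
    filter_upwards [key2] with x hx
    rcases eq_or_lt_of_le (hρnn x) with hz | hz
    · rw [← hz]
      simp only [zero_mul]
      by_contra hg
      push_neg at hg
      obtain ⟨q, hq1, hq2⟩ := exists_rat_btwn (show (0:ℝ) < -g x by linarith)
      have hq0 : 0 < q := by exact_mod_cast hq1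
      have h := hx q hq0
      rw [← hz] at h
      simp only [mul_zero, zero_sub] at h
      linarith
    · set z := ρ x with hzdef
      have hseq : ∀ k : ℕ, ∃ q : ℚ, z - z / (k + 1) < (q:ℝ) ∧ (q:ℝ) < z := by
        intro k
        apply exists_rat_btwn
        have : 0 < z / ((k:ℝ) + 1) := by positivity
        linarith
      choose qs hq1 hq2 using hseq
      have hqpos : ∀ k, 0 < qs k := by
        intro k
        have h1 := hq1 k
        have hk : z / ((k:ℝ) + 1) ≤ z := by
          apply div_le_self hz.le
          have : (0:ℝ) ≤ (k:ℝ) := Nat.cast_nonneg k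
          linarith
        have : (0:ℝ) < (qs k : ℝ) := by linarith
        exact_mod_cast this
      have hlim : Tendsto (fun k : ℕ => ((qs k : ℝ))) atTop (nhds z) := by
        apply tendsto_of_tendsto_of_tendsto_of_le_of_le
          (g := fun k : ℕ => z - z / ((k:ℝ) + 1)) (h := fun _ : ℕ => z)
        · have h0 : Tendsto (fun k : ℕ => z / ((k:ℝ) + 1)) atTop (nhds 0) := by
            have := tendsto_one_div_add_atTop_nhds_zero_nat.const_mul z
            simpa [mul_one_div, div_eq_mul_inv] using this
          have := tendsto_const_nhds (x := z) (f := atTop (α := ℕ)) |>.sub h0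
          simpa using this
        · exact tendsto_const_nhds
        · exact fun k => (hq1 k).le
        · exact fun k => (hq2 k).le
      have hcont : ContinuousAt (fun t : ℝ => (Real.log t + 1) * z - t) z := by
        exact (((Real.continuousAt_log hz.ne').add continuousAt_const).mul
          continuousAt_const).sub continuousAt_id
      have hlim2 : Tendsto (fun k => (Real.log (qs k) + 1) * z - ((qs k : ℝ)))
          atTop (nhds ((Real.log z + 1) * z - z)) := hcont.tendsto.comp hlim
      have he : (Real.log z + 1) * z - z = z * Real.log z := by ring
      rw [he] at hlim2
      exact le_of_tendsto hlim2 (Eventually.of_forall fun k => hx (qs k) (hqpos k))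
  refine ⟨hae, fun hE => ?_⟩
  -- g = ρ log ρ a.e.
  have heq : g =ᵐ[μ] fun x => ρ x * Real.log (ρ x) := by
    have hnn' : 0 ≤ᵐ[μ] fun x => g x - ρ x * Real.log (ρ x) := by
      filter_upwards [hae] with x hx; simp [sub_nonneg, hx]
    have hzero : ∫ x, (g x - ρ x * Real.log (ρ x)) ∂μ = 0 := by
      rw [integral_sub hgi hρli, hE]; ring
    have := (integral_eq_zero_iff_of_nonneg_ae hnn' (hgi.sub hρli)).1 hzero
    filter_upwards [this] with x hx
    have : g x - ρ x * Real.log (ρ x) = 0 := hx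
    linarith
  rw [tendstoInMeasure_iff_dist]
  intro ε hε
  rw [ENNReal.tendsto_atTop_zero]
  intro δ hδ
  obtain ⟨r, hr, hrδ⟩ : ∃ r : ℝ, 0 < r ∧ ENNReal.ofReal r ≤ δ := by
    rcases eq_or_ne δ ⊤ with h | h
    · exact ⟨1, one_pos, by simp [h]⟩
    · exact ⟨δ.toReal, ENNReal.toReal_pos hδ.ne' h, by rw [ENNReal.ofReal_toReal h]⟩
  -- the bad set sequence
  set C : ℕ → Set X := fun k =>
    {x | ρ x ≠ 0 ∧ (ρ x < 1 / ((k:ℝ) + 1) ∨ (k:ℝ) + 1 < ρ x)} with hCdef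
  have hCm : ∀ k, MeasurableSet (C k) := by
    intro k
    have h1 : MeasurableSet {x | ρ x = 0} := hρm (measurableSet_singleton 0)
    have h2 : MeasurableSet {x | ρ x < 1 / ((k:ℝ) + 1)} := measurableSet_lt hρm measurable_const
    have h3 : MeasurableSet {x | (k:ℝ) + 1 < ρ x} := measurableSet_lt measurable_const hρm
    have : C k = {x | ρ x = 0}ᶜ ∩ ({x | ρ x < 1 / ((k:ℝ) + 1)} ∪ {x | (k:ℝ) + 1 < ρ x}) := by
      ext x; simp [hCdef, Set.mem_setOf_eq, and_comm]
    rw [this]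
    exact (h1.compl).inter (h2.union h3)
  have hCanti : Antitone C := by
    intro k m hkm x hx
    obtain ⟨h0, h1⟩ := hx
    refine ⟨h0, ?_⟩
    have hkm' : (k:ℝ) + 1 ≤ (m:ℝ) + 1 := by exact_mod_cast Nat.succ_le_succ hkm
    rcases h1 with h | h
    · left
      have : 1 / ((m:ℝ) + 1) ≤ 1 / ((k:ℝ) + 1) := by
        apply one_div_le_one_div_of_le (by positivity) hkm'
      linarith
    · right; linarith
  have hCempty : ⋂ k, C k = ∅ := by
    ext x
    simp only [Set.mem_iInter, Set.mem_empty_iff_false, iff_false, not_forall]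
    by_cases h0 : ρ x = 0
    · exact ⟨0, fun h => h.1 h0⟩
    · have hzx : 0 < ρ x := lt_of_le_of_ne (hρnn x) (Ne.symm h0)
      obtain ⟨k, hk⟩ := exists_nat_ge (max (1 / ρ x) (ρ x))
      refine ⟨k, fun h => ?_⟩
      have hk1 : 1 / ρ x ≤ (k:ℝ) := le_trans (le_max_left _ _) hk
      have hk2 : ρ x ≤ (k:ℝ) := le_trans (le_max_right _ _) hk
      rcases h.2 with h1 | h1
      · have ha : 1 ≤ (k:ℝ) * ρ x := by
          have := (div_le_iff₀ hzx).1 hk1; linarith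
        have hb : ρ x * ((k:ℝ) + 1) < 1 := by
          have := (lt_div_iff₀ (by positivity : (0:ℝ) < (k:ℝ) + 1)).1 h1
          linarith
        nlinarith
      · linarith
  have hCtend : Tendsto (fun k => μ (C k)) atTop (nhds 0) := by
    have h := tendsto_measure_iInter_atTop (fun k => (hCm k).nullMeasurableSet) hCanti
      ⟨0, measure_ne_top μ _⟩
    rw [hCempty, measure_empty] at h
    exact h
  obtain ⟨k, hk⟩ := (hCtend.eventually_lt_const
    (show (0 : ENNReal) < ENNReal.ofReal (r / 4) from ENNReal.ofReal_pos.2 (by linarith))).exists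
  set c : ℝ := 1 / ((k:ℝ) + 1) with hcdef
  set M : ℝ := (k:ℝ) + 1 with hMdef
  have hc : 0 < c := by positivity
  have hM0 : 0 < M := by positivity
  set A : Set X := {x | c ≤ ρ x ∧ ρ x ≤ M} with hAdef
  have hA : MeasurableSet A := (measurableSet_le measurable_const hρm).inter
    (measurableSet_le hρm measurable_const)
  set Z : Set X := {x | ρ x = 0} with hZdef
  have hZ : MeasurableSet Z := hρm (measurableSet_singleton 0)
  set η : ℝ := (Real.sqrt (M + ε) - Real.sqrt M) ^ 2 with hηdef
  have hη : 0 < η := by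
    have h1 : Real.sqrt M < Real.sqrt (M + ε) := Real.sqrt_lt_sqrt hM0.le (by linarith)
    have := sub_pos.2 h1
    positivity
  set S : ℕ → Set X := fun n => {x | ε ≤ dist (ρn n x) (ρ x)} with hSdef
  have hS : ∀ n, MeasurableSet (S n) :=
    fun n => measurableSet_le measurable_const ((hm n).dist hρm)
  -- bound for log on A
  set B₀ : ℝ := |Real.log c| + |Real.log M| + 1 with hB₀def
  have hB₀ : ∀ x ∈ A, |Real.log (ρ x) + 1| ≤ B₀ := by
    intro x hx
    have l1 : Real.log c ≤ Real.log (ρ x) := Real.log_le_log hc hx.1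
    have l2 : Real.log (ρ x) ≤ Real.log M := Real.log_le_log (lt_of_lt_of_le hc hx.1) hx.2
    have a1 := neg_abs_le (Real.log c)
    have a2 := le_abs_self (Real.log M)
    have a3 := abs_nonneg (Real.log c)
    have a4 := abs_nonneg (Real.log M)
    rw [abs_le]; constructor <;> [skip; skip] <;> simp only [hB₀def] <;> linarith
  -- ψ
  set ψ : X → ℝ := A.indicator (fun x => Real.log (ρ x) + 1) with hψdef
  have hψm : Measurable ψ := ((Real.measurable_log.comp hρm).add measurable_const).indicator hA
  have hψb : ∃ B : ℝ, ∀ x, |ψ x| ≤ B := by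
    refine ⟨B₀, fun x => ?_⟩
    by_cases hx : x ∈ A
    · simp only [hψdef, Set.indicator_of_mem hx]; exact hB₀ x hx
    · simp only [hψdef, Set.indicator_of_notMem hx, abs_zero, hB₀def]
      positivity
  -- indicator conversion
  have conv : ∀ (s : Set X), MeasurableSet s → ∀ f : X → ℝ,
      ∫ x, f x * s.indicator (fun _ => (1:ℝ)) x ∂μ = ∫ x in s, f x ∂μ := by
    intro s hs f
    rw [← integral_indicator hs]
    congr 1; funext x
    by_cases hx : x ∈ s <;> simp [Set.indicator_apply, hx]
  have convψ : ∀ f : X → ℝ,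
      ∫ x, f x * ψ x ∂μ = ∫ x in A, f x * (Real.log (ρ x) + 1) ∂μ := by
    intro f
    rw [← integral_indicator hA]
    congr 1; funext x
    by_cases hx : x ∈ A <;> simp [hψdef, Set.indicator_apply, hx]
  have hindm : ∀ (s : Set X), MeasurableSet s → Measurable (s.indicator (fun _ : X => (1:ℝ))) :=
    fun s hs => measurable_const.indicator hs
  have hindb : ∀ (s : Set X), ∃ B : ℝ, ∀ x, |s.indicator (fun _ : X => (1:ℝ)) x| ≤ B :=
    fun s => ⟨1, fun x => by by_cases hx : x ∈ s <;> simp [Set.indicator_apply, hx]⟩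
  -- integrabilities on A
  have hint2 : ∀ n, IntegrableOn (fun x => ρn n x * (Real.log (ρ x) + 1)) A μ := by
    intro n
    apply Integrable.mono' (((hi n).const_mul B₀).restrict (s := A))
    · exact ((hm n).mul ((Real.measurable_log.comp hρm).add measurable_const)).aestronglyMeasurable
    · filter_upwards [ae_restrict_mem hA] with x hx
      rw [Real.norm_eq_abs, abs_mul, abs_of_nonneg (hnn n x)]
      calc ρn n x * |Real.log (ρ x) + 1| ≤ ρn n x * B₀ :=
            mul_le_mul_of_nonneg_left (hB₀ x hx) (hnn n x)
        _ = B₀ * ρn n x := by ring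
  -- F and its decomposition
  set F : ℕ → X → ℝ := fun n x =>
    ρn n x * Real.log (ρn n x) - ρn n x * (Real.log (ρ x) + 1) + ρ x with hFdef
  have hFint : ∀ n, IntegrableOn (F n) A μ :=
    fun n => (((hli n).integrableOn).sub (hint2 n)).add hρi.integrableOn
  have decomp : ∀ n, ∫ x in A, F n x ∂μ
      = (∫ x in A, ρn n x * Real.log (ρn n x) ∂μ)
        - (∫ x in A, ρn n x * (Real.log (ρ x) + 1) ∂μ) + ∫ x in A, ρ x ∂μ := by
    intro n
    have Ia : IntegrableOn
        (fun x => ρn n x * Real.log (ρn n x) - ρn n x * (Real.log (ρ x) + 1)) A μ :=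
      ((hli n).integrableOn).sub (hint2 n)
    rw [integral_add Ia hρi.integrableOn, integral_sub ((hli n).integrableOn) (hint2 n)]
  -- limits
  have T1 : Tendsto (fun n => ∫ x in A, ρn n x * Real.log (ρn n x) ∂μ) atTop
      (nhds (∫ x in A, g x ∂μ)) := by
    have h := hweaklog _ (hindm A hA) (hindb A)
    rw [conv A hA g] at h
    exact h.congr fun n => conv A hA _
  have T2 : Tendsto (fun n => ∫ x in A, ρn n x * (Real.log (ρ x) + 1) ∂μ) atTop
      (nhds (∫ x in A, ρ x * (Real.log (ρ x) + 1) ∂μ)) := by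
    have h := hweak ψ hψm hψb
    rw [convψ ρ] at h
    exact h.congr fun n => convψ _
  have Lzero : (∫ x in A, g x ∂μ) - (∫ x in A, ρ x * (Real.log (ρ x) + 1) ∂μ)
      + ∫ x in A, ρ x ∂μ = 0 := by
    have e1 : ∫ x in A, g x ∂μ = ∫ x in A, ρ x * Real.log (ρ x) ∂μ :=
      integral_congr_ae (ae_restrict_of_ae heq)
    have e2 : ∫ x in A, ρ x * (Real.log (ρ x) + 1) ∂μ
        = ∫ x in A, (ρ x * Real.log (ρ x) + ρ x) ∂μ := by
      congr 1; funext x; ring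
    have e3 : ∫ x in A, (ρ x * Real.log (ρ x) + ρ x) ∂μ
        = ∫ x in A, ρ x * Real.log (ρ x) ∂μ + ∫ x in A, ρ x ∂μ :=
      integral_add hρli.integrableOn hρi.integrableOn
    rw [e1, e2, e3]; ring
  have TF : Tendsto (fun n => ∫ x in A, F n x ∂μ) atTop (nhds 0) := by
    have h := (T1.sub T2).add (tendsto_const_nhds (x := ∫ x in A, ρ x ∂μ))
    rw [Lzero] at h
    exact h.congr fun n => (decomp n).symm
  -- Markov for A
  have hFB : ∀ n x, x ∈ A → (Real.sqrt (ρn n x) - Real.sqrt (ρ x)) ^ 2 ≤ F n x := by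
    intro n x hx
    have hρx : 0 < ρ x := lt_of_lt_of_le hc hx.1
    have h := aux_bregman hρx (hnn n x)
    have e : ρn n x * Real.log (ρn n x) - ρ x * Real.log (ρ x)
        - (Real.log (ρ x) + 1) * (ρn n x - ρ x) = F n x := by
      simp only [hFdef]; ring
    linarith [e ▸ h]
  have hMark : ∀ n, η * (μ (A ∩ S n)).toReal ≤ ∫ x in A, F n x ∂μ := by
    intro n
    have hsub : A ∩ S n ⊆ A := Set.inter_subset_left
    have h1 : η * (μ (A ∩ S n)).toReal ≤ ∫ x in A ∩ S n, F n x ∂μ := by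
      rw [show η * (μ (A ∩ S n)).toReal = μ.real (A ∩ S n) • η by rw [smul_eq_mul, mul_comm]; rfl]
      apply setIntegral_ge_of_const_le (hA.inter (hS n)) (measure_ne_top μ _)
      · intro x hx
        have hρx : 0 < ρ x := lt_of_lt_of_le hc hx.1.1
        have hd : ε ≤ |ρn n x - ρ x| := by
          have := hx.2; rwa [hSdef, Set.mem_setOf_eq, Real.dist_eq] at this
        have h2 := aux_sqrtgap hε hρx.le hx.1.2 (hnn n x) hd
        exact le_trans h2 (hFB n x hx.1)
      · exact (hFint n).mono_set hsub
    have h2 : ∫ x in A ∩ S n, F n x ∂μ ≤ ∫ x in A, F n x ∂μ := by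
      apply setIntegral_mono_set (hFint n)
      · filter_upwards [ae_restrict_mem hA] with x hx
        exact le_trans (sq_nonneg _) (hFB n x hx)
      · exact HasSubset.Subset.eventuallyLE hsub
    linarith
  have E1 : ∀ᶠ n in atTop, μ (A ∩ S n) < ENNReal.ofReal (r / 4) := by
    filter_upwards [TF.eventually_lt_const (show (0:ℝ) < η * (r / 4) by positivity)] with n hn
    have h := hMark n
    have ht : (μ (A ∩ S n)).toReal < r / 4 := by
      by_contra hcon
      push_neg at hcon
      nlinarith
    rw [← ENNReal.ofReal_toReal (measure_ne_top μ (A ∩ S n))]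
    exact (ENNReal.ofReal_lt_ofReal_iff (by linarith)).2 ht
  -- Z part
  have T3 : Tendsto (fun n => ∫ x in Z, ρn n x ∂μ) atTop (nhds 0) := by
    have h := hweak _ (hindm Z hZ) (hindb Z)
    rw [conv Z hZ ρ] at h
    have e0 : ∫ x in Z, ρ x ∂μ = 0 := by
      rw [← integral_zero X ℝ (μ := μ.restrict Z)]  -- may fail; fix below
      apply integral_congr_ae
      filter_upwards [ae_restrict_mem hZ] with x hx
      exact hx
    rw [e0] at h
    exact h.congr fun n => conv Z hZ _
  have E2 : ∀ᶠ n in atTop, μ (Z ∩ S n) < ENNReal.ofReal (r / 4) := by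
    filter_upwards [T3.eventually_lt_const (show (0:ℝ) < ε * (r / 4) by positivity)] with n hn
    have h1 : ε * (μ (Z ∩ S n)).toReal ≤ ∫ x in Z ∩ S n, ρn n x ∂μ := by
      rw [show ε * (μ (Z ∩ S n)).toReal = μ.real (Z ∩ S n) • ε by rw [smul_eq_mul, mul_comm]; rfl]
      apply setIntegral_ge_of_const_le (hZ.inter (hS n)) (measure_ne_top μ _)
      · intro x hx
        have hzx : ρ x = 0 := hx.1
        have := hx.2
        rw [hSdef, Set.mem_setOf_eq, Real.dist_eq, hzx, sub_zero,
          abs_of_nonneg (hnn n x)] at this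
        exact this
      · exact (hi n).integrableOn
    have h2 : ∫ x in Z ∩ S n, ρn n x ∂μ ≤ ∫ x in Z, ρn n x ∂μ := by
      apply setIntegral_mono_set ((hi n).integrableOn)
      · filter_upwards with x using hnn n x
      · exact HasSubset.Subset.eventuallyLE Set.inter_subset_left
    have ht : (μ (Z ∩ S n)).toReal < r / 4 := by
      by_contra hcon
      push_neg at hcon
      nlinarith
    rw [← ENNReal.ofReal_toReal (measure_ne_top μ (Z ∩ S n))]
    exact (ENNReal.ofReal_lt_ofReal_iff (by linarith)).2 ht
  obtain ⟨N, hN⟩ := eventually_atTop.1 (E1.and E2)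
  refine ⟨N, fun n hn => ?_⟩
  have hsplit : S n ⊆ (A ∩ S n) ∪ (Z ∩ S n) ∪ C k := by
    intro x hx
    rcases eq_or_ne (ρ x) 0 with h0 | h0
    · exact Or.inl (Or.inr ⟨h0, hx⟩)
    · rcases le_or_gt c (ρ x) with h1 | h1
      · rcases le_or_gt (ρ x) M with h2 | h2
        · exact Or.inl (Or.inl ⟨⟨h1, h2⟩, hx⟩)
        · exact Or.inr ⟨h0, Or.inr h2⟩
      · exact Or.inr ⟨h0, Or.inl h1⟩
  obtain ⟨hN1, hN2⟩ := hN n hn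
  calc μ (S n) ≤ μ ((A ∩ S n) ∪ (Z ∩ S n) ∪ C k) := measure_mono hsplit
    _ ≤ μ ((A ∩ S n) ∪ (Z ∩ S n)) + μ (C k) := measure_union_le _ _
    _ ≤ μ (A ∩ S n) + μ (Z ∩ S n) + μ (C k) :=
        add_le_add_left (measure_union_le _ _) _
    _ ≤ ENNReal.ofReal (r / 4) + ENNReal.ofReal (r / 4) + ENNReal.ofReal (r / 4) := by
        exact add_le_add (add_le_add hN1.le hN2.le) hk.le
    _ ≤ ENNReal.ofReal r := by
        rw [← ENNReal.ofReal_add (by linarith) (by linarith),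
          ← ENNReal.ofReal_add (by linarith) (by linarith)]
        exact ENNReal.ofReal_le_ofReal (by linarith)
    _ ≤ δ := hrδ
end
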